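/- arXiv:1505.01679 — 3 statements merged into one kernel-verified Lean document; each statement's English description precedes it below -/
import Mathlib

section
/- Let α, β ∈ (0,1) with α + β > 1, and suppose f is Hölder of exponent α and g is Hölder of exponent β on an interval I. Then for each t in the interior of I, the 'defect' in the Leibniz rule for the h-scale derivative tends to zero: □_h(f·g)/□t (t) − [□_h f/□t (t)·g(t) + f(t)·□_h g/□t (t)] → 0 as h → 0⁺. -/
/-- The h-scale derivative of a real function, as a complex number. -/
noncomputable def scaleDerivH (f : ℝ → ℝ) (h t : ℝ) : ℂ :=
  (1 / 2 : ℂ) *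
    ((((f (t + h) - f t) / h : ℝ) + ((f t - f (t - h)) / h : ℝ)) +
      Complex.I * (((f (t + h) - f t) / h : ℝ) - ((f t - f (t - h)) / h : ℝ)))

lemma defect_eq (f g : ℝ → ℝ) (h t : ℝ) (hh : h ≠ 0) :
    scaleDerivH (fun x => f x * g x) h t -
      (scaleDerivH f h t * (g t : ℂ) + (f t : ℂ) * scaleDerivH g h t)
    = (1/2 : ℂ) *
        ((((f (t+h) - f t) * (g (t+h) - g t) / h : ℝ)
            + (-(f t - f (t-h)) * (g t - g (t-h)) / h : ℝ))
          + Complex.I *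
            (((f (t+h) - f t) * (g (t+h) - g t) / h : ℝ)
              - (-(f t - f (t-h)) * (g t - g (t-h)) / h : ℝ))) := by
  have hh' : (h : ℂ) ≠ 0 := by exact_mod_cast hh
  simp only [scaleDerivH]
  push_cast
  field_simp
  ring

lemma norm_aux (a b : ℝ) :
    ‖(1/2 : ℂ) * (((a:ℂ) + b) + Complex.I * ((a:ℂ) - b))‖ ≤ |a| + |b| := by
  have h1 : ‖((a:ℂ) + b)‖ = |a + b| := by
    rw [← Complex.ofReal_add, Complex.norm_real]; exact Real.norm_eq_abs _
  have h2 : ‖Complex.I * ((a:ℂ) - b)‖ = |a - b| := by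
    rw [norm_mul, Complex.norm_I, one_mul, ← Complex.ofReal_sub, Complex.norm_real]
    exact Real.norm_eq_abs _
  calc ‖(1/2 : ℂ) * (((a:ℂ) + b) + Complex.I * ((a:ℂ) - b))‖
      ≤ (1/2) * (|a + b| + |a - b|) := by
        rw [norm_mul]
        gcongr
        · simp
        · rw [← h1, ← h2]; exact norm_add_le _ _
    _ ≤ (1/2) * ((|a| + |b|) + (|a| + |b|)) := by
        gcongr
        · exact abs_add_le _ _
        · exact abs_sub _ _
    _ = |a| + |b| := by ring

theorem scale_leibniz_defect (α β : ℝ) (hα : α ∈ Set.Ioo (0:ℝ) 1)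
    (hβ : β ∈ Set.Ioo (0:ℝ) 1) (hαβ : 1 < α + β)
    (I : Set ℝ) (f g : ℝ → ℝ)
    (hf : ∃ C > 0, ∀ s ∈ I, ∀ t ∈ I, |f t - f s| ≤ C * |t - s| ^ α)
    (hg : ∃ C > 0, ∀ s ∈ I, ∀ t ∈ I, |g t - g s| ≤ C * |t - s| ^ β)
    (t : ℝ) (ht : t ∈ interior I) :
    Filter.Tendsto
      (fun h : ℝ =>
        scaleDerivH (fun x => f x * g x) h t -
          (scaleDerivH f h t * (g t : ℂ) + (f t : ℂ) * scaleDerivH g h t))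
      (nhdsWithin 0 (Set.Ioi 0)) (nhds 0) := by
  obtain ⟨Cf, hCf, Hf⟩ := hf
  obtain ⟨Cg, hCg, Hg⟩ := hg
  obtain ⟨ε, hε, hball⟩ := Metric.mem_nhds_iff.mp (mem_interior_iff_mem_nhds.mp ht)
  -- bound function
  have hpow : Filter.Tendsto (fun h : ℝ => 2 * Cf * Cg * h ^ (α + β - 1))
      (nhdsWithin 0 (Set.Ioi 0)) (nhds 0) := by
    have h0 : (0:ℝ) < α + β - 1 := by linarith
    have : Filter.Tendsto (fun h : ℝ => h ^ (α + β - 1)) (nhds 0) (nhds 0) := by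
      have := (Real.continuousAt_rpow_const 0 (α + β - 1) (Or.inr (le_of_lt h0)))
      simpa [Real.zero_rpow (ne_of_gt h0)] using this.tendsto
    have h2 := (this.const_mul (2 * Cf * Cg)).mono_left
      (nhdsWithin_le_nhds (s := Set.Ioi (0:ℝ)))
    simpa using h2
  apply squeeze_zero_norm' _ hpow
  have hmem : Set.Ioo (0:ℝ) ε ∈ nhdsWithin (0:ℝ) (Set.Ioi 0) :=
    Ioo_mem_nhdsGT_of_mem ⟨le_refl 0, hε⟩
  filter_upwards [hmem] with h hh
  obtain ⟨hh0, hhε⟩ := hh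
  have hne : h ≠ 0 := ne_of_gt hh0
  have htI : t ∈ I := hball (by simp [hε])
  have ht1 : t + h ∈ I := by
    apply hball; simp [Metric.mem_ball, Real.dist_eq, abs_of_pos hh0, hhε]
  have ht2 : t - h ∈ I := by
    apply hball
    simp only [Metric.mem_ball, Real.dist_eq]
    rw [show t - h - t = -h by ring, abs_neg, abs_of_pos hh0]; exact hhε
  rw [defect_eq f g h t hne]
  set a := (f (t+h) - f t) * (g (t+h) - g t) / h with ha
  set b := -(f t - f (t-h)) * (g t - g (t-h)) / h with hb
  refine (norm_aux a b).trans ?_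
  have habs : |t + h - t| = h := by rw [show t + h - t = h by ring, abs_of_pos hh0]
  have habs2 : |t - h - t| = h := by
    rw [show t - h - t = -h by ring, abs_neg, abs_of_pos hh0]
  have key : Cf * h ^ α * (Cg * h ^ β) / h = Cf * Cg * h ^ (α + β - 1) := by
    rw [Real.rpow_sub hh0, Real.rpow_one, Real.rpow_add hh0]; ring
  have bnd : ∀ (u v : ℝ), |u| ≤ Cf * h ^ α → |v| ≤ Cg * h ^ β →
      |u * v / h| ≤ Cf * Cg * h ^ (α + β - 1) := by
    intro u v hu hv
    have huv : |u| * |v| ≤ Cf * h ^ α * (Cg * h ^ β) :=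
      mul_le_mul hu hv (abs_nonneg _) (by positivity)
    calc |u * v / h| = |u| * |v| / h := by rw [abs_div, abs_mul, abs_of_pos hh0]
      _ ≤ Cf * h ^ α * (Cg * h ^ β) / h := by gcongr
      _ = Cf * Cg * h ^ (α + β - 1) := key
  have hA : |a| ≤ Cf * Cg * h ^ (α + β - 1) := by
    rw [ha]
    exact bnd _ _ (by simpa [habs, abs_of_pos hh0] using Hf t htI (t+h) ht1)
      (by simpa [habs, abs_of_pos hh0] using Hg t htI (t+h) ht1)
  have hB : |b| ≤ Cf * Cg * h ^ (α + β - 1) := by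
    rw [hb, neg_mul, neg_div, abs_neg]
    exact bnd _ _ (by simpa [habs2, abs_of_pos hh0] using Hf (t-h) ht2 t htI)
      (by simpa [habs2, abs_of_pos hh0] using Hg (t-h) ht2 t htI)
  linarith
end

section
/- If f : [a,b] → ℝ is continuously differentiable, then ∫_a^b (□_h f/□t)(t) dt → f(b) − f(a) as h → 0⁺ (where f is extended continuously differentiably to a slightly larger interval). -/
open Filter Set MeasureTheory intervalIntegral Complex

private lemma tendsto_slope_aux {F : ℝ → ℝ} {x L : ℝ} (hd : HasDerivAt F L x)
    {g : ℝ → ℝ} (hg : Filter.Tendsto g (nhdsWithin 0 (Set.Ioi 0)) (nhdsWithin x {x}ᶜ)) :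
    Filter.Tendsto (fun h : ℝ => (F (g h) - F x) / (g h - x))
      (nhdsWithin 0 (Set.Ioi 0)) (nhds L) := by
  have := (hasDerivAt_iff_tendsto_slope.mp hd).comp hg
  exact this.congr fun h => by simp [Function.comp, slope_def_field]

private lemma tendsto_add_aux (x : ℝ) :
    Filter.Tendsto (fun h : ℝ => x + h) (nhdsWithin 0 (Set.Ioi 0)) (nhdsWithin x {x}ᶜ) := by
  rw [tendsto_nhdsWithin_iff]
  constructor
  · have : Filter.Tendsto (fun h : ℝ => x + h) (nhds 0) (nhds x) := by
      simpa using (continuous_const_add x).tendsto (0:ℝ)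
    exact this.mono_left nhdsWithin_le_nhds
  · filter_upwards [self_mem_nhdsWithin] with h hh
    simp only [Set.mem_compl_iff, Set.mem_singleton_iff, add_eq_left]
    exact (hh : (0:ℝ) < h).ne'

private lemma tendsto_sub_aux (x : ℝ) :
    Filter.Tendsto (fun h : ℝ => x - h) (nhdsWithin 0 (Set.Ioi 0)) (nhdsWithin x {x}ᶜ) := by
  rw [tendsto_nhdsWithin_iff]
  constructor
  · have : Filter.Tendsto (fun h : ℝ => x - h) (nhds 0) (nhds x) := by
      simpa using (continuous_sub_left x).tendsto (0:ℝ)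
    exact this.mono_left nhdsWithin_le_nhds
  · filter_upwards [self_mem_nhdsWithin] with h hh
    simp only [Set.mem_compl_iff, Set.mem_singleton_iff, sub_eq_self]
    exact (hh : (0:ℝ) < h).ne'

theorem scale_barrow (a b c d : ℝ) (hca : c < a) (hab : a ≤ b) (hbd : b < d)
    (f : ℝ → ℝ) (hf : ContDiffOn ℝ 1 f (Set.Ioo c d)) :
    Filter.Tendsto (fun h : ℝ => ∫ t in a..b, scaleDerivH f h t)
      (nhdsWithin 0 (Set.Ioi 0)) (nhds ((f b - f a : ℝ) : ℂ)) := by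
  have hO : IsOpen (Set.Ioo c d) := isOpen_Ioo
  have hcont : ContinuousOn f (Set.Ioo c d) := hf.continuousOn
  have ha_in : a ∈ Set.Ioo c d := ⟨hca, lt_of_le_of_lt hab hbd⟩
  have hb_in : b ∈ Set.Ioo c d := ⟨lt_of_lt_of_le hca hab, hbd⟩
  set F : ℝ → ℝ := fun u => ∫ t in a..u, f t with hFdef
  have hint : ∀ x ∈ Set.Ioo c d, ∀ y ∈ Set.Ioo c d, IntervalIntegrable f volume x y :=
    fun x hx y hy =>
      (hcont.mono (Set.ordConnected_Ioo.uIcc_subset hx hy)).intervalIntegrable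
  have hderiv : ∀ x ∈ Set.Ioo c d, HasDerivAt F (f x) x := fun x hx =>
    intervalIntegral.integral_hasDerivAt_right (hint a ha_in x hx)
      (hcont.stronglyMeasurableAtFilter hO x hx)
      (hcont.continuousAt (hO.mem_nhds hx))
  -- the four slope limits
  have hP : Filter.Tendsto (fun h : ℝ => (F (b + h) - F b) / h)
      (nhdsWithin 0 (Set.Ioi 0)) (nhds (f b)) :=
    (tendsto_slope_aux (hderiv b hb_in) (tendsto_add_aux b)).congr
      fun h => by rw [add_sub_cancel_left]
  have hQ : Filter.Tendsto (fun h : ℝ => (F (a + h) - F a) / h)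
      (nhdsWithin 0 (Set.Ioi 0)) (nhds (f a)) :=
    (tendsto_slope_aux (hderiv a ha_in) (tendsto_add_aux a)).congr
      fun h => by rw [add_sub_cancel_left]
  have hR : Filter.Tendsto (fun h : ℝ => (F b - F (b - h)) / h)
      (nhdsWithin 0 (Set.Ioi 0)) (nhds (f b)) :=
    (tendsto_slope_aux (hderiv b hb_in) (tendsto_sub_aux b)).congr
      fun h => by rw [show b - h - b = -h by ring, div_neg, ← neg_div, neg_sub]
  have hS : Filter.Tendsto (fun h : ℝ => (F a - F (a - h)) / h)
      (nhdsWithin 0 (Set.Ioi 0)) (nhds (f a)) :=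
    (tendsto_slope_aux (hderiv a ha_in) (tendsto_sub_aux a)).congr
      fun h => by rw [show a - h - a = -h by ring, div_neg, ← neg_div, neg_sub]
  -- the model limit
  have keylim : Filter.Tendsto
      (fun h : ℝ => ((1 + Complex.I) / 2) *
          (((F (b + h) - F b) / h - (F (a + h) - F a) / h : ℝ) : ℂ) +
        ((1 - Complex.I) / 2) *
          (((F b - F (b - h)) / h - (F a - F (a - h)) / h : ℝ) : ℂ))
      (nhdsWithin 0 (Set.Ioi 0)) (nhds ((f b - f a : ℝ) : ℂ)) := by
    have hPQ : Filter.Tendsto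
        (fun h : ℝ => ((F (b + h) - F b) / h - (F (a + h) - F a) / h : ℝ))
        (nhdsWithin 0 (Set.Ioi 0)) (nhds (f b - f a)) := hP.sub hQ
    have hRS : Filter.Tendsto
        (fun h : ℝ => ((F b - F (b - h)) / h - (F a - F (a - h)) / h : ℝ))
        (nhdsWithin 0 (Set.Ioi 0)) (nhds (f b - f a)) := hR.sub hS
    have h1 : Filter.Tendsto
        (fun h : ℝ => (((F (b + h) - F b) / h - (F (a + h) - F a) / h : ℝ) : ℂ))
        (nhdsWithin 0 (Set.Ioi 0)) (nhds ((f b - f a : ℝ) : ℂ)) :=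
      (Complex.continuous_ofReal.tendsto _).comp hPQ
    have h2 : Filter.Tendsto
        (fun h : ℝ => (((F b - F (b - h)) / h - (F a - F (a - h)) / h : ℝ) : ℂ))
        (nhdsWithin 0 (Set.Ioi 0)) (nhds ((f b - f a : ℝ) : ℂ)) :=
      (Complex.continuous_ofReal.tendsto _).comp hRS
    have h3 := (h1.const_mul ((1 + Complex.I) / 2)).add (h2.const_mul ((1 - Complex.I) / 2))
    convert h3 using 1
    push_cast
    ring
  -- eventual equality of the integral with the model
  set ε : ℝ := min (a - c) (d - b) with hεdef
  have hε : 0 < ε := lt_min (by linarith) (by linarith)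
  refine keylim.congr' ?_
  filter_upwards [Ioo_mem_nhdsGT_of_mem (show (0:ℝ) ∈ Set.Ico 0 ε from ⟨le_refl 0, hε⟩)]
    with h hh
  obtain ⟨hh0, hhε⟩ := hh
  have hhac : h < a - c := lt_of_lt_of_le hhε (min_le_left _ _)
  have hhdb : h < d - b := lt_of_lt_of_le hhε (min_le_right _ _)
  have hap : a + h ∈ Set.Ioo c d := ⟨by linarith, by linarith⟩
  have hbp : b + h ∈ Set.Ioo c d := ⟨by linarith, by linarith⟩
  have ham : a - h ∈ Set.Ioo c d := ⟨by linarith, by linarith⟩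
  have hbm : b - h ∈ Set.Ioo c d := ⟨by linarith, by linarith⟩
  have huIcc : Set.uIcc a b ⊆ Set.Icc a b := by rw [Set.uIcc_of_le hab]
  -- integrability of the shifted functions on [a,b]
  have hfp : ContinuousOn (fun t => f (t + h)) (Set.uIcc a b) := by
    refine hcont.comp ((continuous_add_right h).continuousOn) fun t ht => ?_
    have ht' := huIcc ht
    exact ⟨by linarith [ht'.1], by linarith [ht'.2]⟩
  have hfm : ContinuousOn (fun t => f (t - h)) (Set.uIcc a b) := by
    refine hcont.comp ((continuous_sub_right h).continuousOn) fun t ht => ?_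
    have ht' := huIcc ht
    exact ⟨by linarith [ht'.1], by linarith [ht'.2]⟩
  have hfc : ContinuousOn f (Set.uIcc a b) :=
    hcont.mono (Set.ordConnected_Ioo.uIcc_subset ha_in hb_in)
  have hip : IntervalIntegrable (fun t => f (t + h)) volume a b := hfp.intervalIntegrable
  have him : IntervalIntegrable (fun t => f (t - h)) volume a b := hfm.intervalIntegrable
  have hic : IntervalIntegrable f volume a b := hfc.intervalIntegrable
  -- real integral identities
  have eΔ : (∫ t in a..b, (f (t + h) - f t) / h) =
      (F (b + h) - F b) / h - (F (a + h) - F a) / h := by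
    have hsub : (∫ t in a..b, (f (t + h) - f t)) =
        (∫ t in a..b, f (t + h)) - ∫ t in a..b, f t :=
      intervalIntegral.integral_sub hip hic
    have hshift : (∫ t in a..b, f (t + h)) = ∫ t in a + h..b + h, f t :=
      intervalIntegral.integral_comp_add_right f h
    have hFsub : F (b + h) - F (a + h) = ∫ t in a + h..b + h, f t :=
      intervalIntegral.integral_interval_sub_left (hint a ha_in _ hbp) (hint a ha_in _ hap)
    have hFa : F a = 0 := intervalIntegral.integral_same
    calc (∫ t in a..b, (f (t + h) - f t) / h)
        = (∫ t in a..b, (f (t + h) - f t)) / h := intervalIntegral.integral_div h _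
      _ = ((F (b + h) - F (a + h)) - F b) / h := by rw [hsub, hshift, ← hFsub]
      _ = (F (b + h) - F b) / h - (F (a + h) - F a) / h := by rw [hFa]; ring
  have eNab : (∫ t in a..b, (f t - f (t - h)) / h) =
      (F b - F (b - h)) / h - (F a - F (a - h)) / h := by
    have hsub : (∫ t in a..b, (f t - f (t - h))) =
        (∫ t in a..b, f t) - ∫ t in a..b, f (t - h) :=
      intervalIntegral.integral_sub hic him
    have hshift : (∫ t in a..b, f (t - h)) = ∫ t in a - h..b - h, f t :=
      intervalIntegral.integral_comp_sub_right f h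
    have hFsub : F (b - h) - F (a - h) = ∫ t in a - h..b - h, f t :=
      intervalIntegral.integral_interval_sub_left (hint a ha_in _ hbm) (hint a ha_in _ ham)
    have hFa : F a = 0 := intervalIntegral.integral_same
    calc (∫ t in a..b, (f t - f (t - h)) / h)
        = (∫ t in a..b, (f t - f (t - h))) / h := intervalIntegral.integral_div h _
      _ = (F b - (F (b - h) - F (a - h))) / h := by rw [hsub, hshift, ← hFsub]
      _ = (F b - F (b - h)) / h - (F a - F (a - h)) / h := by rw [hFa]; ring
  -- complex integral computation
  have hfun : (fun t => scaleDerivH f h t) = fun t =>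
      ((1 + Complex.I) / 2) * (((f (t + h) - f t) / h : ℝ) : ℂ) +
      ((1 - Complex.I) / 2) * (((f t - f (t - h)) / h : ℝ) : ℂ) := by
    funext t
    unfold scaleDerivH
    ring
  have hipC : IntervalIntegrable (fun t => (((f (t + h) - f t) / h : ℝ) : ℂ)) volume a b := by
    apply ContinuousOn.intervalIntegrable
    exact Complex.continuous_ofReal.comp_continuousOn ((hfp.sub hfc).div_const h)
  have himC : IntervalIntegrable (fun t => (((f t - f (t - h)) / h : ℝ) : ℂ)) volume a b := by
    apply ContinuousOn.intervalIntegrable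
    exact Complex.continuous_ofReal.comp_continuousOn ((hfc.sub hfm).div_const h)
  calc ((1 + Complex.I) / 2) *
          (((F (b + h) - F b) / h - (F (a + h) - F a) / h : ℝ) : ℂ) +
        ((1 - Complex.I) / 2) *
          (((F b - F (b - h)) / h - (F a - F (a - h)) / h : ℝ) : ℂ)
      = ((1 + Complex.I) / 2) * ((∫ t in a..b, (f (t + h) - f t) / h : ℝ) : ℂ) +
        ((1 - Complex.I) / 2) * ((∫ t in a..b, (f t - f (t - h)) / h : ℝ) : ℂ) := by
        rw [eΔ, eNab]
    _ = ∫ t in a..b, scaleDerivH f h t := by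
        rw [hfun]
        rw [intervalIntegral.integral_add (hipC.const_mul _) (himC.const_mul _),
          intervalIntegral.integral_const_mul, intervalIntegral.integral_const_mul,
          intervalIntegral.integral_ofReal, intervalIntegral.integral_ofReal]
end

section
/- Fixed-endpoint, free-time transversality (classical version of Theorem 3.7): Let L be C¹ and suppose (ỹ, T̃), with ỹ ∈ C¹, ỹ(a) = y_a, ỹ(T̃) = y_T, T̃ ∈ (a,b), extremizes I[y,T] = ∫_a^T L(t,y(t),y'(t)) dt over the class of C¹ curves with y(a)=y_a, y(T)=y_T and variable T (in the sense that the first variation vanishes for all admissible variation pairs). Assume t ↦ ∂L/∂v(t,ỹ(t),ỹ'(t)) is C¹. Then the Euler–Lagrange equation holds on [a,T̃] and L(T̃, ỹ(T̃), ỹ'(T̃)) = ∂L/∂v(T̃, ỹ(T̃), ỹ'(T̃))·ỹ'(T̃). -/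
open Set intervalIntegral

lemma maxsq_hasDeriv : ∀ x : ℝ, HasDerivAt (fun x : ℝ => (max x 0)^2) (2 * max x 0) x := by
  intro x
  rcases lt_trichotomy x 0 with hx | hx | hx
  · have hev : (fun x : ℝ => (max x 0)^2) =ᶠ[nhds x] fun _ => (0:ℝ) := by
      filter_upwards [Iio_mem_nhds hx] with t ht
      simp [max_eq_right (le_of_lt (mem_Iio.mp ht))]
    have : HasDerivAt (fun _ : ℝ => (0:ℝ)) 0 x := hasDerivAt_const x 0
    simpa [max_eq_right hx.le] using this.congr_of_eventuallyEq hev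
  · subst hx
    rw [hasDerivAt_iff_tendsto]
    apply squeeze_zero (g := fun x : ℝ => |x|) (fun t => by positivity)
    · intro t
      rcases eq_or_ne t 0 with rfl | ht
      · simp
      · have h1 : (max t 0)^2 ≤ t^2 := by
          have : |max t 0| ≤ |t| := by
            rw [abs_of_nonneg (le_max_right t 0)]
            exact max_le (le_abs_self t) (abs_nonneg t)
          calc (max t 0)^2 = |max t 0|^2 := (sq_abs _).symm
            _ ≤ |t|^2 := by exact pow_le_pow_left₀ (abs_nonneg _) this 2
            _ = t^2 := sq_abs t
        have ht' : (0:ℝ) < |t| := abs_pos.mpr ht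
        simp only [sub_zero, smul_zero, max_self, Real.norm_eq_abs]
        norm_num
        calc |t|⁻¹ * (max t 0)^2 ≤ |t|⁻¹ * t^2 := by
              exact mul_le_mul_of_nonneg_left h1 (by positivity)
          _ = |t| := by rw [← sq_abs t, sq, ← mul_assoc, inv_mul_cancel₀ ht'.ne', one_mul]
    · simpa using continuous_abs.tendsto (0:ℝ)
  · have hev : (fun x : ℝ => (max x 0)^2) =ᶠ[nhds x] fun t => t^2 := by
      filter_upwards [Ioi_mem_nhds hx] with t ht
      simp [max_eq_left (le_of_lt (mem_Ioi.mp ht))]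
    have : HasDerivAt (fun t : ℝ => t^2) (2 * x) x := by
      simpa using hasDerivAt_pow 2 x
    simpa [max_eq_left hx.le] using this.congr_of_eventuallyEq hev

lemma maxsq_contDiff : ContDiff ℝ 1 (fun x : ℝ => (max x 0)^2) := by
  rw [contDiff_one_iff_deriv]
  constructor
  · exact fun x => (maxsq_hasDeriv x).differentiableAt
  · have : deriv (fun x : ℝ => (max x 0)^2) = fun x => 2 * max x 0 := by
      funext x; exact (maxsq_hasDeriv x).deriv
    rw [this]
    exact continuous_const.mul (continuous_id.max continuous_const)

lemma bump_contDiff (c d : ℝ) : ContDiff ℝ 1 (fun t : ℝ => (max ((t-c)*(d-t)) 0)^2) :=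
  maxsq_contDiff.comp (((contDiff_id.sub contDiff_const).mul (contDiff_const.sub contDiff_id)))

lemma bump_eq_zero {c d t : ℝ} (hcd : c < d) (ht : t ≤ c ∨ d ≤ t) :
    (max ((t-c)*(d-t)) 0)^2 = 0 := by
  have : (t-c)*(d-t) ≤ 0 := by
    rcases ht with h | h
    · exact mul_nonpos_of_nonpos_of_nonneg (by linarith) (by linarith)
    · exact mul_nonpos_of_nonneg_of_nonpos (by linarith) (by linarith)
  simp [max_eq_right this]

lemma fund_pos (E : ℝ → ℝ) (hE : Continuous E) (a T : ℝ) (haT : a < T)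
    (h : ∀ η : ℝ → ℝ, ContDiff ℝ 1 η → η a = 0 → η T = 0 →
      ∫ t in a..T, E t * η t = 0)
    (t0 : ℝ) (ht0 : t0 ∈ Set.Icc a T) (hpos : 0 < E t0) : False := by
  obtain ⟨ht0a, ht0T⟩ := ht0
  -- find ε > 0 s.t. E > 0 on closed ball of radius ε around t0
  have : ∀ᶠ t in nhds t0, 0 < E t := (hE.tendsto t0).eventually (eventually_gt_nhds hpos)
  obtain ⟨ε, hε, hball⟩ := Metric.eventually_nhds_iff_ball.mp this
  set ε' := ε / 2 with hε'
  have hε'pos : 0 < ε' := by positivity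
  set c := max a (t0 - ε') with hc
  set d := min T (t0 + ε') with hd
  have hcd : c < d := by
    apply max_lt <;> apply lt_min <;> linarith
  have hac : a ≤ c := le_max_left _ _
  have hdT : d ≤ T := min_le_left _ _
  have hEcd : ∀ t ∈ Set.Icc c d, 0 < E t := by
    intro t ⟨h1, h2⟩
    apply hball
    rw [Metric.mem_ball, Real.dist_eq, abs_lt]
    have := le_max_right a (t0 - ε')
    have := min_le_right T (t0 + ε')
    constructor <;> linarith
  set η : ℝ → ℝ := fun t => (max ((t-c)*(d-t)) 0)^2 with hηdef
  have hη1 : ContDiff ℝ 1 η := bump_contDiff c d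
  have hηa : η a = 0 := bump_eq_zero hcd (Or.inl hac)
  have hηT : η T = 0 := bump_eq_zero hcd (Or.inr hdT)
  have hint := h η hη1 hηa hηT
  have hcont : Continuous fun t => E t * η t := hE.mul hη1.continuous
  have hsplit : (∫ t in a..T, E t * η t) =
      (∫ t in a..c, E t * η t) + (∫ t in c..d, E t * η t) + (∫ t in d..T, E t * η t) := by
    rw [integral_add_adjacent_intervals (hcont.intervalIntegrable a c) (hcont.intervalIntegrable c d),
        integral_add_adjacent_intervals
          ((hcont.intervalIntegrable a c).trans (hcont.intervalIntegrable c d))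
          (hcont.intervalIntegrable d T)]
  have h1 : (∫ t in a..c, E t * η t) = 0 := by
    rw [show (∫ t in a..c, E t * η t) = ∫ t in a..c, (0:ℝ) from
      integral_congr fun t ht => ?_, integral_zero]
    rw [Set.uIcc_of_le hac] at ht
    simp [hηdef, bump_eq_zero hcd (Or.inl ht.2)]
  have h3 : (∫ t in d..T, E t * η t) = 0 := by
    rw [show (∫ t in d..T, E t * η t) = ∫ t in d..T, (0:ℝ) from
      integral_congr fun t ht => ?_, integral_zero]
    rw [Set.uIcc_of_le hdT] at ht
    simp [hηdef, bump_eq_zero hcd (Or.inr ht.1)]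
  have h2 : 0 < ∫ t in c..d, E t * η t := by
    apply intervalIntegral_pos_of_pos_on (hcont.intervalIntegrable c d) _ hcd
    intro x hx
    have hE' := hEcd x ⟨hx.1.le, hx.2.le⟩
    have hη' : 0 < η x := by
      have : 0 < (x-c)*(d-x) := mul_pos (by linarith [hx.1]) (by linarith [hx.2])
      simp only [hηdef]
      rw [max_eq_left this.le]
      positivity
    exact mul_pos hE' hη'
  rw [hsplit, h1, h3] at hint
  linarith

lemma fund (E : ℝ → ℝ) (hE : Continuous E) (a T : ℝ) (haT : a < T)
    (h : ∀ η : ℝ → ℝ, ContDiff ℝ 1 η → η a = 0 → η T = 0 →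
      ∫ t in a..T, E t * η t = 0) :
    ∀ t ∈ Set.Icc a T, E t = 0 := by
  intro t ht
  by_contra hne
  rcases lt_or_gt_of_ne hne with hlt | hgt
  · refine fund_pos (fun s => -E s) hE.neg a T haT ?_ t ht (by simpa using neg_pos.mpr hlt)
    intro η hη hηa hηT
    have := h η hη hηa hηT
    have : (∫ s in a..T, -(E s * η s)) = 0 := by rw [integral_neg, this, neg_zero]
    simpa [neg_mul] using this
  · exact fund_pos E hE a T haT h t ht hgt

theorem fixed_endpoint_free_time_transversality
    (a b ya yT : ℝ) (hab : a < b)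
    (L : ℝ → ℝ → ℝ → ℝ)
    (hL : ContDiff ℝ 1 (fun p : ℝ × ℝ × ℝ => L p.1 p.2.1 p.2.2))
    (y : ℝ → ℝ) (hy : ContDiff ℝ 1 y) (hya : y a = ya)
    (T : ℝ) (hT : T ∈ Set.Ioo a b) (hyT : y T = yT)
    (Ly : ℝ → ℝ → ℝ → ℝ) (hLy : ∀ t z v, Ly t z v = deriv (fun z' => L t z' v) z)
    (Lv : ℝ → ℝ → ℝ → ℝ) (hLv : ∀ t z v, Lv t z v = deriv (fun v' => L t z v') v)
    (hLvC1 : ContDiff ℝ 1 (fun t => Lv t (y t) (deriv y t)))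
    (hext : ∀ η : ℝ → ℝ, ContDiff ℝ 1 η → η a = 0 → ∀ δ : ℝ,
      η T + deriv y T * δ = 0 →
      (∫ t in a..T,
          (Ly t (y t) (deriv y t) -
            deriv (fun s => Lv s (y s) (deriv y s)) t) * η t) +
        Lv T (y T) (deriv y T) * η T + L T (y T) (deriv y T) * δ = 0) :
    (∀ t ∈ Set.Icc a T,
        Ly t (y t) (deriv y t) = deriv (fun s => Lv s (y s) (deriv y s)) t) ∧
      L T (y T) (deriv y T) = Lv T (y T) (deriv y T) * deriv y T := by
  obtain ⟨haT, hTb⟩ := hT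
  set F : ℝ × ℝ × ℝ → ℝ := fun p => L p.1 p.2.1 p.2.2 with hF
  -- Ly as an fderiv evaluation
  have key : ∀ t z v, Ly t z v = fderiv ℝ F (t, z, v) (0, 1, 0) := by
    intro t z v
    have hdF : HasFDerivAt F (fderiv ℝ F (t, z, v)) (t, z, v) :=
      (hL.differentiable one_ne_zero (t, z, v)).hasFDerivAt
    have hg : HasDerivAt (fun z' : ℝ => ((t, z', v) : ℝ × ℝ × ℝ)) (0, 1, 0) z :=
      (hasDerivAt_const z t).prodMk ((hasDerivAt_id z).prodMk (hasDerivAt_const z v))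
    have hcomp : HasDerivAt (fun z' : ℝ => L t z' v) (fderiv ℝ F (t, z, v) (0, 1, 0)) z :=
      by have := hdF.comp_hasDerivAt z hg; exact this
    rw [hLy, hcomp.deriv]
  have hLyCont : Continuous fun t => Ly t (y t) (deriv y t) := by
    have h1 : Continuous (fderiv ℝ F) := hL.continuous_fderiv one_ne_zero
    have h2 : Continuous fun t => ((t, y t, deriv y t) : ℝ × ℝ × ℝ) :=
      continuous_id.prodMk ((hy.continuous).prodMk (hy.continuous_deriv le_rfl))
    have h3 : Continuous fun t => fderiv ℝ F (t, y t, deriv y t) (0, 1, 0) :=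
      (h1.comp h2).clm_apply continuous_const
    simpa only [← key] using h3
  set E : ℝ → ℝ := fun t =>
    Ly t (y t) (deriv y t) - deriv (fun s => Lv s (y s) (deriv y s)) t with hE
  have hEcont : Continuous E := hLyCont.sub (hLvC1.continuous_deriv le_rfl)
  -- Euler–Lagrange on [a, T]
  have hEL : ∀ t ∈ Set.Icc a T, E t = 0 := by
    apply fund E hEcont a T haT
    intro η hη hηa hηT
    have := hext η hη hηa 0 (by simp [hηT])
    simpa [hηT] using this
  have hEL' : ∀ t ∈ Set.Icc a T,
      Ly t (y t) (deriv y t) = deriv (fun s => Lv s (y s) (deriv y s)) t := by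
    intro t ht
    have := hEL t ht
    simp only [hE] at this
    linarith
  refine ⟨hEL', ?_⟩
  -- the integral term vanishes for any η
  have hzero : ∀ η : ℝ → ℝ, (∫ t in a..T, E t * η t) = 0 := by
    intro η
    rw [show (∫ t in a..T, E t * η t) = ∫ t in a..T, (0:ℝ) from
      integral_congr fun t ht => ?_, integral_zero]
    rw [Set.uIcc_of_le haT.le] at ht
    rw [hEL t ht, zero_mul]
  rcases eq_or_ne (deriv y T) 0 with hv | hv
  · have h0 := hext (fun _ => 0) contDiff_const rfl 1 (by simp [hv])
    simp only [mul_zero, mul_one, add_zero, zero_add,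
      intervalIntegral.integral_zero] at h0
    rw [hv] at h0 ⊢
    simp [h0]
  · have hηa : (fun t : ℝ => t - a) a = 0 := by simp
    have hconstraint : (fun t : ℝ => t - a) T + deriv y T * (-(T - a) / deriv y T) = 0 := by
      field_simp
      ring
    have := hext (fun t => t - a) (contDiff_id.sub contDiff_const) hηa
      (-(T - a) / deriv y T) hconstraint
    have hz := hzero (fun t => t - a)
    simp only [hE] at hz
    rw [hz] at this
    simp only [zero_add] at this
    have hTa : T - a ≠ 0 := by linarith
    field_simp at this
    -- this : Lv T (y T) (deriv y T) * (T - a) * deriv y T = L T (y T) (deriv y T) * (T - a)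
    have := mul_right_cancel₀ hTa (by linarith : L T (y T) (deriv y T) * (T - a) =
      Lv T (y T) (deriv y T) * deriv y T * (T - a))
    exact this
end
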